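/- Let S be an ordered semigroup satisfying axioms O1–O6, and let λ₁, λ₂, λ₃ be functionals on S. Then (λ₁ ∨ λ₂) + λ₃ = (λ₁ + λ₃) ∨ (λ₂ + λ₃), where ∨ denotes the least upper bound in F(S) and + is pointwise addition of functionals. -/

import Mathlib

open scoped ENNReal

/-- `CC s t` : `s` is (sequentially) compactly contained in `t`, written `s ≪ t`. -/
def CC {S : Type*} [AddCommMonoid S] [PartialOrder S] (s t : S) : Prop :=
  ∀ u : ℕ → S, Monotone u → ∀ x : S, IsLUB (Set.range u) x → t ≤ x → ∃ n, s ≤ u n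

/-- An ordered semigroup (positive, with translation invariant order) satisfying axioms O1-O5. -/
structure CuO5 (S : Type*) [AddCommMonoid S] [PartialOrder S] : Prop where
  addRightMono : ∀ {s t : S}, s ≤ t → ∀ r : S, s + r ≤ t + r
  zeroLe : ∀ s : S, 0 ≤ s
  O1 : ∀ u : ℕ → S, Monotone u → ∃ x : S, IsLUB (Set.range u) x
  O2 : ∀ s : S, ∃ u : ℕ → S, (∀ n, CC (u n) (u (n + 1))) ∧ IsLUB (Set.range u) s
  O3 : ∀ {s₁ t₁ s₂ t₂ : S}, CC s₁ t₁ → CC s₂ t₂ → CC (s₁ + s₂) (t₁ + t₂)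
  O4 : ∀ u v : ℕ → S, Monotone u → Monotone v → ∀ x y : S,
    IsLUB (Set.range u) x → IsLUB (Set.range v) y →
    IsLUB (Set.range fun n => u n + v n) (x + y)
  O5 : ∀ {s' s t : S}, CC s' s → s ≤ t → ∃ r : S, s' + r ≤ t ∧ t ≤ s + r

/-- Axioms O1-O6. -/
structure CuO6 (S : Type*) [AddCommMonoid S] [PartialOrder S] extends CuO5 S : Prop where
  O6 : ∀ {s r t : S}, s ≤ r + t → ∀ {s' : S}, CC s' s →
    ∃ r' t' : S, s' ≤ r' + t' ∧ r' ≤ r ∧ r' ≤ s ∧ t' ≤ t ∧ t' ≤ s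

/-- A functional on `S`: additive, order preserving, zero preserving map to `[0,∞]`
preserving suprema of increasing sequences. -/
structure IsFunctional {S : Type*} [AddCommMonoid S] [PartialOrder S] (l : S → ℝ≥0∞) : Prop where
  map_zero : l 0 = 0
  map_add : ∀ s t : S, l (s + t) = l s + l t
  mono : ∀ {s t : S}, s ≤ t → l s ≤ l t
  map_sup : ∀ u : ℕ → S, Monotone u → ∀ x : S, IsLUB (Set.range u) x → l x = ⨆ n, l (u n)

/-- Real multiplication on `S` : a map `(0,∞] × S → S` additive, order preserving and
sup-(of increasing sequences)-preserving in each variable, with `1 · s = s`.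
Scalars are elements of `ℝ≥0∞` required to be positive. -/
structure RealMul (S : Type*) [AddCommMonoid S] [PartialOrder S] where
  smul : ℝ≥0∞ → S → S
  add_left : ∀ {a b : ℝ≥0∞}, 0 < a → 0 < b → ∀ s : S, smul (a + b) s = smul a s + smul b s
  add_right : ∀ {a : ℝ≥0∞}, 0 < a → ∀ s t : S, smul a (s + t) = smul a s + smul a t
  mono_left : ∀ {a b : ℝ≥0∞}, 0 < a → a ≤ b → ∀ s : S, smul a s ≤ smul b s
  mono_right : ∀ {a : ℝ≥0∞}, 0 < a → ∀ {s t : S}, s ≤ t → smul a s ≤ smul a t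
  sup_left : ∀ u : ℕ → ℝ≥0∞, Monotone u → 0 < u 0 → ∀ s : S,
    IsLUB (Set.range fun n => smul (u n) s) (smul (⨆ n, u n) s)
  sup_right : ∀ {a : ℝ≥0∞}, 0 < a → ∀ u : ℕ → S, Monotone u → ∀ x : S,
    IsLUB (Set.range u) x → IsLUB (Set.range fun n => smul a (u n)) (smul a x)
  one_smul : ∀ s : S, smul 1 s = s

/-- `D` is a dense subset of `S`: every element of `S` is the supremum of a rapidly
increasing sequence of elements of `D`. -/
def IsDenseSub {S : Type*} [AddCommMonoid S] [PartialOrder S] (D : Set S) : Prop :=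
  ∀ s : S, ∃ u : ℕ → S, (∀ n, u n ∈ D) ∧ (∀ n, CC (u n) (u (n + 1))) ∧ IsLUB (Set.range u) s

/-- `m` is the least upper bound of the functionals `l₁` and `l₂` in `F(S)`
(pointwise order). -/
def IsFSup {S : Type*} [AddCommMonoid S] [PartialOrder S] (l₁ l₂ m : S → ℝ≥0∞) : Prop :=
  IsFunctional m ∧ (∀ s, l₁ s ≤ m s) ∧ (∀ s, l₂ s ≤ m s) ∧
    ∀ d : S → ℝ≥0∞, IsFunctional d → (∀ s, l₁ s ≤ d s) → (∀ s, l₂ s ≤ d s) → ∀ s, m s ≤ d s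

/-- `m` is the greatest lower bound of the functionals `l₁` and `l₂` in `F(S)`
(pointwise order). -/
def IsFInf {S : Type*} [AddCommMonoid S] [PartialOrder S] (l₁ l₂ m : S → ℝ≥0∞) : Prop :=
  IsFunctional m ∧ (∀ s, m s ≤ l₁ s) ∧ (∀ s, m s ≤ l₂ s) ∧
    ∀ d : S → ℝ≥0∞, IsFunctional d → (∀ s, d s ≤ l₁ s) → (∀ s, d s ≤ l₂ s) → ∀ s, d s ≤ m s

/-- An isomorphism of ordered semigroups between `S` and the extended natural numbers. -/
def IsOrdSemigroupIso {S : Type*} [AddCommMonoid S] [PartialOrder S] (e : S ≃ ℕ∞) : Prop :=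
  (∀ a b : S, e (a + b) = e a + e b) ∧ e 0 = 0 ∧ ∀ a b : S, a ≤ b ↔ e a ≤ e b

section Aux

variable {S : Type*} [AddCommMonoid S] [PartialOrder S]

theorem CC.le' {s t : S} (h : CC s t) : s ≤ t := by
  obtain ⟨n, hn⟩ := h (fun _ => t) (fun _ _ _ => le_rfl) t
    ⟨by rintro _ ⟨n, rfl⟩; exact le_rfl, fun x hx => hx ⟨0, rfl⟩⟩ le_rfl
  exact hn

theorem CC.trans_le' {s t t' : S} (h : CC s t) (h' : t ≤ t') : CC s t' :=
  fun u hu x hx hle => h u hu x hx (h'.trans hle)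

theorem exists_chain (hS : CuO5 S) (s : S) :
    ∃ u : ℕ → S, Monotone u ∧ (∀ n, CC (u n) (u (n + 1))) ∧ (∀ n, CC (u n) s) ∧
      IsLUB (Set.range u) s := by
  obtain ⟨u, hcc, hlub⟩ := hS.O2 s
  exact ⟨u, monotone_nat_of_le_succ fun n => (hcc n).le', hcc,
    fun n => (hcc n).trans_le' (hlub.1 ⟨n + 1, rfl⟩), hlub⟩

theorem IsFunctional.add' {f g : S → ℝ≥0∞} (hf : IsFunctional f) (hg : IsFunctional g) :
    IsFunctional (fun s => f s + g s) := by
  refine ⟨by simp [hf.map_zero, hg.map_zero], fun s t => ?_, fun h => ?_, fun u hu x hx => ?_⟩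
  · rw [hf.map_add, hg.map_add]; ring
  · exact add_le_add (hf.mono h) (hg.mono h)
  · rw [hf.map_sup u hu x hx, hg.map_sup u hu x hx]
    exact ENNReal.iSup_add_iSup fun i j => ⟨max i j,
      add_le_add (hf.mono (hu (le_max_left i j))) (hg.mono (hu (le_max_right i j)))⟩

theorem sAdd_le_add (hS : CuO5 S) {a b c d : S} (h1 : a ≤ b) (h2 : c ≤ d) :
    a + c ≤ b + d := by
  have h3 : a + c ≤ b + c := hS.addRightMono h1 c
  have h4 : c + b ≤ d + b := hS.addRightMono h2 b
  calc a + c ≤ b + c := h3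
    _ = c + b := add_comm _ _
    _ ≤ d + b := h4
    _ = b + d := add_comm _ _

theorem sLe_add_right (hS : CuO5 S) (a b : S) : a ≤ a + b := by
  have := hS.addRightMono (hS.zeroLe b) a
  rwa [zero_add, add_comm] at this

section Key

variable {l₃ m' : S → ℝ≥0∞}

/-- Key translation inequality: for `r ≤ t`, `m'(r) + l₃(t) ≤ m'(t) + l₃(r)`. -/
theorem keyB (hS : CuO5 S) (h₃ : IsFunctional l₃) (hm' : IsFunctional m')
    (h3m : ∀ x, l₃ x ≤ m' x) {r t : S} (hrt : r ≤ t) :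
    m' r + l₃ t ≤ m' t + l₃ r := by
  obtain ⟨u, hmono, -, hcc, hlub⟩ := exists_chain hS r
  rw [hm'.map_sup u hmono r hlub, ENNReal.iSup_add]
  refine iSup_le fun n => ?_
  obtain ⟨c, hc1, hc2⟩ := hS.O5 (hcc n) hrt
  calc m' (u n) + l₃ t ≤ m' (u n) + (l₃ r + l₃ c) := by
        refine add_le_add_right ((h₃.mono hc2).trans ?_) _
        rw [h₃.map_add]
      _ = (m' (u n) + l₃ c) + l₃ r := by ring
      _ ≤ (m' (u n) + m' c) + l₃ r := by gcongr; exact h3m c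
      _ ≤ m' t + l₃ r := by
        refine add_le_add_left ?_ _
        rw [← hm'.map_add]; exact hm'.mono hc1

theorem e_mono (hS : CuO5 S) (h₃ : IsFunctional l₃) (hm' : IsFunctional m')
    (h3m : ∀ x, l₃ x ≤ m' x) {r t : S} (hrt : r ≤ t) (ht : l₃ t ≠ ⊤) :
    m' r - l₃ r ≤ m' t - l₃ t := by
  rw [tsub_le_iff_right]
  rw [← ENNReal.add_le_add_iff_right ht]
  calc m' r + l₃ t ≤ m' t + l₃ r := keyB hS h₃ hm' h3m hrt
    _ = (m' t - l₃ t) + l₃ t + l₃ r := by rw [tsub_add_cancel_of_le (h3m t)]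
    _ = (m' t - l₃ t) + l₃ r + l₃ t := by ring

theorem e_add (h₃ : IsFunctional l₃) (hm' : IsFunctional m')
    (h3m : ∀ x, l₃ x ≤ m' x) {a b : S} (ha : l₃ a ≠ ⊤) (hb : l₃ b ≠ ⊤) :
    m' (a + b) - l₃ (a + b) = (m' a - l₃ a) + (m' b - l₃ b) := by
  rw [h₃.map_add, hm'.map_add]
  refine ENNReal.sub_eq_of_eq_add (ENNReal.add_ne_top.2 ⟨ha, hb⟩) ?_
  calc m' a + m' b = ((m' a - l₃ a) + l₃ a) + ((m' b - l₃ b) + l₃ b) := by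
        rw [tsub_add_cancel_of_le (h3m a), tsub_add_cancel_of_le (h3m b)]
    _ = (m' a - l₃ a) + (m' b - l₃ b) + (l₃ a + l₃ b) := by ring

/-- sup-continuity of `x ↦ m' x - l₃ x` along chains with lub `r` having finite `l₃`. -/
theorem e_sup (hS : CuO5 S) (h₃ : IsFunctional l₃) (hm' : IsFunctional m')
    (h3m : ∀ x, l₃ x ≤ m' x) {r : S} (hr : l₃ r ≠ ⊤)
    {u : ℕ → S} (hmono : Monotone u) (hub : ∀ n, u n ≤ r) (hlub : IsLUB (Set.range u) r) :
    m' r - l₃ r = ⨆ n, (m' (u n) - l₃ (u n)) := by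
  have hun : ∀ n, l₃ (u n) ≠ ⊤ := fun n h => hr (top_le_iff.1 (h ▸ h₃.mono (hub n)))
  refine ENNReal.sub_eq_of_eq_add hr ?_
  rw [hm'.map_sup u hmono r hlub, h₃.map_sup u hmono r hlub]
  rw [ENNReal.iSup_add_iSup fun i j => ⟨max i j,
    add_le_add (e_mono hS h₃ hm' h3m (hmono (le_max_left i j)) (hun _))
      (h₃.mono (hmono (le_max_right i j)))⟩]
  congr 1 with n
  exact (tsub_add_cancel_of_le (h3m (u n))).symm

end Key

/-- `auxD l₃ m' r = sup { m' x - l₃ x : x ≤ r, l₃ x < ∞ }`. -/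
noncomputable def auxD (l₃ m' : S → ℝ≥0∞) (r : S) : ℝ≥0∞ :=
  ⨆ (x : S) (_ : x ≤ r ∧ l₃ x ≠ ⊤), (m' x - l₃ x)

/-- `auxN l₃ r = ∞` iff some `x ≪ r` has `l₃ x = ∞`, else `0`. -/
noncomputable def auxN (l₃ : S → ℝ≥0∞) (r : S) : ℝ≥0∞ :=
  ⨆ (x : S) (_ : CC x r ∧ l₃ x = ⊤), (⊤ : ℝ≥0∞)

section DN

variable {l₃ m' : S → ℝ≥0∞}

theorem le_auxD {x r : S} (hx : x ≤ r) (hx' : l₃ x ≠ ⊤) : m' x - l₃ x ≤ auxD l₃ m' r :=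
  le_iSup₂ (f := fun (x : S) (_ : x ≤ r ∧ l₃ x ≠ ⊤) => m' x - l₃ x) x ⟨hx, hx'⟩

theorem auxD_mono {r t : S} (hrt : r ≤ t) : auxD l₃ m' r ≤ auxD l₃ m' t :=
  iSup₂_le fun x hx => le_auxD (hx.1.trans hrt) hx.2

theorem auxD_eq (hS5 : CuO5 S) (h₃ : IsFunctional l₃) (hm' : IsFunctional m')
    (h3m : ∀ x, l₃ x ≤ m' x) {r : S} (hr : l₃ r ≠ ⊤) :
    auxD l₃ m' r = m' r - l₃ r :=
  le_antisymm (iSup₂_le fun _ hx => e_mono hS5 h₃ hm' h3m hx.1 hr) (le_auxD le_rfl hr)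

theorem auxN_eq_top {x r : S} (h1 : CC x r) (h2 : l₃ x = ⊤) : auxN l₃ r = ⊤ :=
  top_le_iff.1 (le_iSup₂ (f := fun (x : S) (_ : CC x r ∧ l₃ x = ⊤) => (⊤ : ℝ≥0∞)) x ⟨h1, h2⟩)

theorem auxN_eq_zero {r : S} (h : ∀ x, CC x r → l₃ x ≠ ⊤) : auxN l₃ r = 0 :=
  le_antisymm (iSup₂_le fun x hx => absurd hx.2 (h x hx.1)) (zero_le)

theorem auxN_mono {r t : S} (hrt : r ≤ t) : auxN l₃ r ≤ auxN l₃ t :=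
  iSup₂_le fun x hx => (auxN_eq_top (hx.1.trans_le' hrt) hx.2).ge

theorem isFunctional_auxD (hS : CuO6 S) (h₃ : IsFunctional l₃) (hm' : IsFunctional m')
    (h3m : ∀ x, l₃ x ≤ m' x) : IsFunctional (auxD l₃ m' (S := S)) := by
  have hS5 := hS.toCuO5
  constructor
  · -- map_zero
    refine le_antisymm (iSup₂_le fun x hx => ?_) (zero_le)
    have hx0 : x = 0 := le_antisymm hx.1 (hS5.zeroLe x)
    simp [hx0, hm'.map_zero, h₃.map_zero]
  · -- map_add
    intro a b
    refine le_antisymm ?_ ?_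
    · -- subadditive, via O6
      refine iSup₂_le fun x hx => ?_
      obtain ⟨hxab, hxF⟩ := hx
      obtain ⟨u, hmono, -, hcc, hlub⟩ := exists_chain hS5 x
      rw [e_sup hS5 h₃ hm' h3m hxF hmono (fun n => (hcc n).le') hlub]
      refine iSup_le fun n => ?_
      obtain ⟨a₁, b₁, hle, ha₁, ha₁x, hb₁, hb₁x⟩ := hS.O6 hxab (hcc n)
      have ha₁F : l₃ a₁ ≠ ⊤ := fun h => hxF (top_le_iff.1 (h ▸ h₃.mono ha₁x))
      have hb₁F : l₃ b₁ ≠ ⊤ := fun h => hxF (top_le_iff.1 (h ▸ h₃.mono hb₁x))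
      have habF : l₃ (a₁ + b₁) ≠ ⊤ := by
        rw [h₃.map_add]; exact ENNReal.add_ne_top.2 ⟨ha₁F, hb₁F⟩
      calc m' (u n) - l₃ (u n) ≤ m' (a₁ + b₁) - l₃ (a₁ + b₁) :=
            e_mono hS5 h₃ hm' h3m hle habF
        _ = (m' a₁ - l₃ a₁) + (m' b₁ - l₃ b₁) := e_add h₃ hm' h3m ha₁F hb₁F
        _ ≤ auxD l₃ m' a + auxD l₃ m' b := add_le_add (le_auxD ha₁ ha₁F) (le_auxD hb₁ hb₁F)
    · -- superadditive
      have hnS : Nonempty S := ⟨0⟩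
      unfold auxD
      rw [ENNReal.iSup_add]
      refine iSup_le fun x => ?_
      by_cases hPx : x ≤ a ∧ l₃ x ≠ ⊤
      · rw [iSup_pos hPx, ENNReal.add_iSup]
        refine iSup_le fun y => ?_
        by_cases hPy : y ≤ b ∧ l₃ y ≠ ⊤
        · rw [iSup_pos hPy]
          have hpq : x + y ≤ a + b := sAdd_le_add hS5 hPx.1 hPy.1
          have hpqF : l₃ (x + y) ≠ ⊤ := by
            rw [h₃.map_add]; exact ENNReal.add_ne_top.2 ⟨hPx.2, hPy.2⟩
          calc (m' x - l₃ x) + (m' y - l₃ y)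
              = m' (x + y) - l₃ (x + y) := (e_add h₃ hm' h3m hPx.2 hPy.2).symm
            _ ≤ ⨆ (z : S) (_ : z ≤ a + b ∧ l₃ z ≠ ⊤), (m' z - l₃ z) := le_auxD hpq hpqF
        · simp only [iSup_neg hPy, bot_eq_zero, add_zero]
          exact le_auxD (hPx.1.trans (sLe_add_right hS5 a b)) hPx.2
      · simp only [iSup_neg hPx, bot_eq_zero, zero_add]
        refine iSup₂_le fun y hy => ?_
        exact le_auxD (hy.1.trans ((sLe_add_right hS5 b a).trans_eq (add_comm b a))) hy.2
  · -- mono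
    exact fun h => auxD_mono h
  · -- map_sup
    intro u hu x hx
    refine le_antisymm ?_ (iSup_le fun n => auxD_mono (hx.1 ⟨n, rfl⟩))
    refine iSup₂_le fun r hr => ?_
    obtain ⟨hrx, hrF⟩ := hr
    obtain ⟨w, hwmono, hwcc, hwr, hwlub⟩ := exists_chain hS5 r
    rw [e_sup hS5 h₃ hm' h3m hrF hwmono (fun n => (hwr n).le') hwlub]
    refine iSup_le fun k => ?_
    have hwk : CC (w k) x := (hwr k).trans_le' hrx
    obtain ⟨n, hn⟩ := hwk u hu x hx le_rfl
    have hwkF : l₃ (w k) ≠ ⊤ := fun h => hrF (top_le_iff.1 (h ▸ h₃.mono (hwr k).le'))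
    exact le_trans (le_auxD hn hwkF) (le_iSup (fun n => auxD l₃ m' (u n)) n)

theorem isFunctional_auxN (hS : CuO6 S) (h₃ : IsFunctional l₃) :
    IsFunctional (auxN l₃ (S := S)) := by
  have hS5 := hS.toCuO5
  constructor
  · -- map_zero
    refine auxN_eq_zero fun x hx => ?_
    have hx0 : x = 0 := le_antisymm hx.le' (hS5.zeroLe x)
    simp [hx0, h₃.map_zero]
  · -- map_add
    intro a b
    by_cases h : ∃ x, CC x (a + b) ∧ l₃ x = ⊤
    · obtain ⟨x, hx, hxT⟩ := h
      obtain ⟨p, hpmono, -, hpa, hplub⟩ := exists_chain hS5 a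
      obtain ⟨q, hqmono, -, hqb, hqlub⟩ := exists_chain hS5 b
      have hsum : IsLUB (Set.range fun n => p n + q n) (a + b) :=
        hS5.O4 p q hpmono hqmono a b hplub hqlub
      have hsmono : Monotone fun n => p n + q n :=
        fun i j hij => sAdd_le_add hS5 (hpmono hij) (hqmono hij)
      obtain ⟨k, hk⟩ := hx (fun n => p n + q n) hsmono (a + b) hsum le_rfl
      have : l₃ (p k) = ⊤ ∨ l₃ (q k) = ⊤ := by
        by_contra hcon
        push_neg at hcon
        have : l₃ x ≤ l₃ (p k) + l₃ (q k) := (h₃.mono hk).trans_eq (h₃.map_add _ _)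
        rw [hxT, top_le_iff] at this
        exact absurd (ENNReal.add_ne_top.2 ⟨hcon.1, hcon.2⟩) (fun hne => hne this)
      rw [auxN_eq_top hx hxT]
      rcases this with hT | hT
      · rw [auxN_eq_top (hpa k) hT]; simp
      · rw [auxN_eq_top (hqb k) hT]; simp
    · push_neg at h
      rw [auxN_eq_zero h, auxN_eq_zero fun x hx =>
          h x (hx.trans_le' (sLe_add_right hS5 a b)),
        auxN_eq_zero fun x hx => h x (hx.trans_le' ((sLe_add_right hS5 b a).trans_eq
          (add_comm b a)))]
      simp
  · exact fun h => auxN_mono h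
  · -- map_sup
    intro u hu x hx
    refine le_antisymm ?_ (iSup_le fun n => auxN_mono (hx.1 ⟨n, rfl⟩))
    by_cases h : ∃ y, CC y x ∧ l₃ y = ⊤
    · obtain ⟨y, hy, hyT⟩ := h
      obtain ⟨w, hwmono, hwcc, hwx, hwlub⟩ := exists_chain hS5 x
      obtain ⟨k, hk⟩ := hy w hwmono x hwlub le_rfl
      obtain ⟨n, hn⟩ := (hwx (k + 1)) u hu x hx le_rfl
      have h1 : CC (w k) (u n) := (hwcc k).trans_le' hn
      have h2 : l₃ (w k) = ⊤ := top_le_iff.1 (hyT ▸ h₃.mono hk)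
      calc auxN l₃ x ≤ ⊤ := le_top
        _ = auxN l₃ (u n) := (auxN_eq_top h1 h2).symm
        _ ≤ ⨆ n, auxN l₃ (u n) := le_iSup (fun n => auxN l₃ (u n)) n
    · push_neg at h
      rw [auxN_eq_zero h]
      exact zero_le

theorem le_dhat (hS : CuO6 S) (h₃ : IsFunctional l₃) (hm' : IsFunctional m')
    (h3m : ∀ x, l₃ x ≤ m' x) {l : S → ℝ≥0∞} (hl : IsFunctional l)
    (hlm : ∀ x, l x + l₃ x ≤ m' x) (r : S) :
    l r ≤ auxD l₃ m' r + auxN l₃ r := by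
  have hS5 := hS.toCuO5
  by_cases hr : l₃ r = ⊤
  · by_cases hex : ∃ x, CC x r ∧ l₃ x = ⊤
    · obtain ⟨x, hx, hxT⟩ := hex
      rw [auxN_eq_top hx hxT]
      simp
    · push_neg at hex
      obtain ⟨u, hmono, -, hcc, hlub⟩ := exists_chain hS5 r
      rw [hl.map_sup u hmono r hlub]
      refine le_trans (iSup_le fun n => ?_) le_self_add
      have hF : l₃ (u n) ≠ ⊤ := hex (u n) (hcc n)
      exact le_trans (ENNReal.le_sub_of_add_le_right hF (hlm (u n)))
        (le_auxD (hcc n).le' hF)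
  · refine le_trans (le_trans ?_ (le_auxD le_rfl hr)) le_self_add
    exact ENNReal.le_sub_of_add_le_right hr (hlm r)

end DN

end Aux

/-- `(λ₁ ∨ λ₂) + λ₃ = (λ₁ + λ₃) ∨ (λ₂ + λ₃)` in F(S). -/
theorem sup_add_distrib {S : Type*} [AddCommMonoid S] [PartialOrder S]
    (hS : CuO6 S) (l₁ l₂ l₃ : S → ℝ≥0∞)
    (h₁ : IsFunctional l₁) (h₂ : IsFunctional l₂) (h₃ : IsFunctional l₃)
    (m m' : S → ℝ≥0∞) (hm : IsFSup l₁ l₂ m)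
    (hm' : IsFSup (fun s => l₁ s + l₃ s) (fun s => l₂ s + l₃ s) m') :
    ∀ s : S, m s + l₃ s = m' s := by
  have hS5 := hS.toCuO5
  have h3m : ∀ x, l₃ x ≤ m' x := fun x => le_add_self.trans (hm'.2.1 x)
  have hM : IsFunctional (fun s => m s + l₃ s) := hm.1.add' h₃
  have hdir1 : ∀ s, m' s ≤ m s + l₃ s :=
    hm'.2.2.2 _ hM (fun s => add_le_add_left (hm.2.1 s) _)
      (fun s => add_le_add_left (hm.2.2.1 s) _)
  have hdhat : IsFunctional (fun s => auxD l₃ m' s + auxN l₃ s) :=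
    (isFunctional_auxD hS h₃ hm'.1 h3m).add' (isFunctional_auxN hS h₃)
  have hl1 : ∀ s, l₁ s ≤ auxD l₃ m' s + auxN l₃ s :=
    le_dhat hS h₃ hm'.1 h3m h₁ hm'.2.1
  have hl2 : ∀ s, l₂ s ≤ auxD l₃ m' s + auxN l₃ s :=
    le_dhat hS h₃ hm'.1 h3m h₂ hm'.2.2.1
  have hml : ∀ s, m s ≤ auxD l₃ m' s + auxN l₃ s := hm.2.2.2 _ hdhat hl1 hl2
  intro s
  refine le_antisymm ?_ (hdir1 s)
  by_cases hs : l₃ s = ⊤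
  · have : m' s = ⊤ := top_le_iff.1 (hs ▸ h3m s)
    simp [this]
  · have hN : auxN l₃ s = 0 :=
      auxN_eq_zero fun x hx h => hs (top_le_iff.1 (h ▸ h₃.mono hx.le'))
    have hD : auxD l₃ m' s = m' s - l₃ s := auxD_eq hS5 h₃ hm'.1 h3m hs
    have hms : m s ≤ m' s - l₃ s := by
      have := hml s
      rwa [hN, hD, add_zero] at this
    calc m s + l₃ s ≤ (m' s - l₃ s) + l₃ s := add_le_add_left hms _
      _ = m' s := tsub_add_cancel_of_le (h3m s)
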